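/- Let A be a unital C*-algebra and let P : A → A be a contractive linear projection whose range B = P(A) is a *-subalgebra of A (closed under multiplication and adjoint) whose unit is e = P(1), so that e = e*, e² = e, and ex = xe = x for all x ∈ B. Then P is a positive map: for every x ∈ A with x ≥ 0, one has P(x) ≥ 0; in particular P(x∘x*) ≥ 0 for every x ∈ A, where x∘y = (xy + yx)/2. -/
import Mathlib

open ComplexStarModule Complex

section Stmt10Aux

variable {A : Type*} [CStarAlgebra A] [PartialOrder A] [StarOrderedRing A]

theorem stmt10_lemA (b : A) (hb : 0 ≤ b) (t : ℝ) :
    ‖b‖^3 + t * ‖b‖^2 ≤ ‖b^3 + t • b^2‖ := by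
  rcases subsingleton_or_nontrivial A with hA | hA
  · simp [Subsingleton.elim b 0]
  have hsa : IsSelfAdjoint b := hb.isSelfAdjoint
  have hn : ‖b‖ ∈ spectrum ℝ b := CStarAlgebra.norm_mem_spectrum_of_nonneg hb
  have hcfc : cfc (fun s : ℝ => s^3 + t * s^2) b = b^3 + t • b^2 := by
    rw [cfc_add .., cfc_pow_id b 3, cfc_const_mul .., cfc_pow_id b 2]
  have hmem : ‖b‖^3 + t * ‖b‖^2 ∈ spectrum ℝ (b^3 + t • b^2) := by
    rw [← hcfc, cfc_map_spectrum (fun s : ℝ => s^3 + t * s^2) b]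
    exact ⟨‖b‖, hn, rfl⟩
  calc ‖b‖^3 + t * ‖b‖^2 ≤ |‖b‖^3 + t * ‖b‖^2| := le_abs_self _
    _ = ‖(‖b‖^3 + t * ‖b‖^2 : ℝ)‖ := rfl
    _ ≤ ‖b^3 + t • b^2‖ := spectrum.norm_le_norm_of_mem hmem

theorem stmt10_absorb {e m : A} (he : IsSelfAdjoint e) (hm : IsSelfAdjoint m)
    (hem : e * (m * m) = m * m) : e * m = m ∧ m * e = m := by
  have h1 : (1 - e) * (m * m) = 0 := by rw [sub_mul, one_mul, hem, sub_self]
  have h2 : star (m * (1 - e)) * (m * (1 - e)) = 0 := by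
    rw [star_mul, hm.star_eq, ((IsSelfAdjoint.one (R := A)).sub he).star_eq]
    calc (1 - e) * m * (m * (1 - e)) = ((1 - e) * (m * m)) * (1 - e) := by simp only [mul_assoc]
      _ = 0 := by rw [h1, zero_mul]
  have h3 : m * (1 - e) = 0 := (CStarRing.star_mul_self_eq_zero_iff _).mp h2
  have h4 : m * e = m := by
    have := h3
    rw [mul_sub, mul_one, sub_eq_zero] at this
    exact this.symm
  refine ⟨?_, h4⟩
  have h5 : (1 - e) * m = 0 := by
    have := congrArg star h3
    rwa [star_mul, hm.star_eq, ((IsSelfAdjoint.one (R := A)).sub he).star_eq, star_zero] at this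
  rw [sub_mul, one_mul, sub_eq_zero] at h5
  exact h5.symm

theorem stmt10_imnorm {u v z : A} (hu : IsSelfAdjoint u) (hv : IsSelfAdjoint v)
    (hz : z = u + I • v) : ‖v‖ ≤ ‖z‖ := by
  have hs : star z = u - I • v := by
    rw [hz, star_add, hu.star_eq, star_smul, hv.star_eq, Complex.star_def, Complex.conj_I,
      neg_smul, sub_eq_add_neg]
  have h2 : z - star z = (2:ℝ) • (I • v) := by
    rw [hz] at hs ⊢
    rw [hs]
    module
  have h3 : ‖z - star z‖ = 2 * ‖v‖ := by
    rw [h2, norm_smul, norm_smul, Complex.norm_I, one_mul, Real.norm_two]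
  have h4 : ‖z - star z‖ ≤ 2 * ‖z‖ := by
    calc ‖z - star z‖ ≤ ‖z‖ + ‖star z‖ := norm_sub_le _ _
      _ = 2 * ‖z‖ := by rw [norm_star]; ring
  linarith [h3 ▸ h4]


theorem stmt10_imzero (P : A →ₗ[ℂ] A)
    (hcontr : ∀ x, ‖P x‖ ≤ ‖x‖)
    (hstar : ∀ x ∈ Set.range P, star x ∈ Set.range P)
    (hesa : P 1 = star (P 1))
    (heunit : ∀ x ∈ Set.range P, P 1 * x = x ∧ x * P 1 = x)
    (x : A) (hx : IsSelfAdjoint x) :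
    ((ℑ (P x) : A))⁺ = 0 := by
  rcases subsingleton_or_nontrivial A with hA | hA
  · exact Subsingleton.elim _ _
  set e := P 1 with he
  have hesa' : IsSelfAdjoint e := hesa.symm
  set a := P x with ha
  set k := (ℑ a : A) with hk
  have hksa : IsSelfAdjoint k := (ℑ a).2
  have hk_mem : k ∈ Set.range P := by
    obtain ⟨y, hy⟩ := hstar a ⟨x, rfl⟩
    refine ⟨(-I) • ((2:ℝ)⁻¹ • (x - y)), ?_⟩
    rw [map_smul, P.map_smul_of_tower, map_sub, hy, ← ha, hk, imaginaryPart_apply_coe]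
  have hek : e * k = k := (heunit k hk_mem).1
  set b := k⁺ with hbdef
  have hbnn : 0 ≤ b := CFC.posPart_nonneg k
  have hbsa : IsSelfAdjoint b := hbnn.isSelfAdjoint
  have hkb : k * b = b * b := by
    conv_lhs => rw [← CFC.posPart_sub_negPart k hksa]
    rw [sub_mul, ← hbdef, CFC.negPart_mul_posPart, sub_zero]
  have hbk : b * k = b * b := by
    have h := congrArg star hkb
    rwa [star_mul, star_mul, hksa.star_eq, hbsa.star_eq] at h
  obtain ⟨heb, hbe⟩ := stmt10_absorb hesa' hbsa (by rw [← hkb, ← mul_assoc, hek])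
  set n := ‖b‖ with hn
  set r := ‖x‖ with hr
  have hest : ∀ t : ℝ, 0 ≤ t → n^3 + t * n^2 ≤ n^2 * Real.sqrt (r^2 + t^2) := by
    intro t ht
    set c : ℂ := (t : ℂ) * I with hc
    set w := x + c • (1:A) with hw
    have hwnorm : ‖w‖ ≤ Real.sqrt (r^2 + t^2) := by
      have hsw : star w = x - c • 1 := by
        rw [hw, star_add, hx.star_eq, star_smul, star_one, hc]
        simp only [Complex.star_def, map_mul, Complex.conj_ofReal, Complex.conj_I]
        rw [mul_neg, neg_smul, sub_eq_add_neg]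
      have hcc : c * c = -(((t:ℝ)^2 : ℝ) : ℂ) := by
        rw [hc]
        push_cast
        rw [mul_mul_mul_comm, Complex.I_mul_I]
        ring
      have hprod : star w * w = x * x + ((t^2 : ℝ) : ℂ) • (1:A) := by
        rw [hsw, hw]
        have hexp : (x - c • 1) * (x + c • (1:A)) = x*x + c • x - (c • x + (c*c) • (1:A)) := by
          simp only [sub_mul, mul_add, smul_mul_assoc, mul_smul_comm, one_mul, mul_one, smul_smul,
            smul_sub]
          abel
        rw [hexp, hcc, neg_smul]
        abel
      have h1 : ‖w‖ * ‖w‖ ≤ r^2 + t^2 := by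
        rw [← CStarRing.norm_star_mul_self, hprod]
        have h2 : ‖((t^2 : ℝ) : ℂ) • (1:A)‖ = t^2 := by
          rw [norm_smul, norm_one, mul_one]
          rw [Complex.norm_real, Real.norm_eq_abs, _root_.abs_of_nonneg (sq_nonneg t)]
        calc ‖x*x + ((t^2 : ℝ) : ℂ) • (1:A)‖ ≤ ‖x*x‖ + ‖((t^2 : ℝ) : ℂ) • (1:A)‖ :=
              norm_add_le _ _
          _ ≤ r^2 + t^2 := by
              rw [h2]
              nlinarith [norm_mul_le x x]
      rw [show Real.sqrt (r^2+t^2) = Real.sqrt (r^2+t^2) from rfl]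
      have h3 : ‖w‖^2 ≤ r^2 + t^2 := by nlinarith [h1]
      calc ‖w‖ = Real.sqrt (‖w‖^2) := by rw [Real.sqrt_sq (norm_nonneg w)]
        _ ≤ Real.sqrt (r^2 + t^2) := Real.sqrt_le_sqrt h3
    have hzw : P w = a + c • e := by rw [hw, map_add, map_smul]
    have hh : IsSelfAdjoint ((ℜ a : A)) := (ℜ a).2
    have haeq : a = (ℜ a : A) + I • k := by
      rw [hk]; exact (realPart_add_I_smul_imaginaryPart a).symm
    have hbzb : b * P w * b = b * (ℜ a : A) * b + I • (b^3 + t • b^2) := by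
      rw [hzw]
      calc b * (a + c • e) * b = b * a * b + c • (b * e * b) := by
            rw [mul_add, mul_smul_comm, add_mul, smul_mul_assoc]
        _ = b * ((ℜ a : A) + I • k) * b + c • (b * b) := by rw [← haeq, hbe]
        _ = b * (ℜ a : A) * b + I • (b * b * b) + c • (b * b) := by
            rw [mul_add, mul_smul_comm, add_mul, smul_mul_assoc, hbk]
        _ = b * (ℜ a : A) * b + I • (b^3 + t • b^2) := by
            rw [hc, mul_smul, Complex.coe_smul, smul_comm (t:ℝ) I (b*b), smul_add]
            rw [show b * b * b = b^3 by rw [pow_succ, pow_two], show b*b = b^2 from (pow_two b).symm]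
            rw [add_assoc]
    have hsab : IsSelfAdjoint (b * (ℜ a : A) * b) := by
      have : star (b * (ℜ a : A) * b) = b * (ℜ a : A) * b := by
        rw [star_mul, star_mul, hbsa.star_eq, hh.star_eq, mul_assoc]
      exact this
    have hsab2 : IsSelfAdjoint (b^3 + t • b^2) :=
      (hbsa.pow 3).add (IsSelfAdjoint.smul (star_trivial t) (hbsa.pow 2))
    have h_im : ‖b^3 + t • b^2‖ ≤ ‖b * P w * b‖ := stmt10_imnorm hsab hsab2 hbzb
    have h_norm : ‖b * P w * b‖ ≤ n^2 * Real.sqrt (r^2 + t^2) := by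
      have e1 : ‖b * P w * b‖ ≤ ‖b * P w‖ * ‖b‖ := norm_mul_le _ _
      have e2 : ‖b * P w‖ ≤ ‖b‖ * ‖P w‖ := norm_mul_le _ _
      have e3 : ‖P w‖ ≤ ‖w‖ := hcontr w
      have e4 : (0:ℝ) ≤ ‖b‖ := norm_nonneg _
      have e5 : (0:ℝ) ≤ ‖P w‖ := norm_nonneg _
      nlinarith [hwnorm, Real.sqrt_nonneg (r^2+t^2)]
    have h_low := stmt10_lemA b hbnn t
    calc n^3 + t * n^2 ≤ ‖b^3 + t • b^2‖ := h_low
      _ ≤ ‖b * P w * b‖ := h_im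
      _ ≤ n^2 * Real.sqrt (r^2 + t^2) := h_norm
  -- conclude b = 0
  by_contra hb0
  have hnpos : 0 < n := norm_pos_iff.mpr hb0
  set t := r^2 / n with htdef
  have ht : 0 ≤ t := div_nonneg (sq_nonneg r) hnpos.le
  have h1 := hest t ht
  set s := Real.sqrt (r^2 + t^2) with hs
  have hs0 : 0 ≤ s := Real.sqrt_nonneg _
  have hs2 : s^2 = r^2 + t^2 := Real.sq_sqrt (by positivity)
  have h2 : n + t ≤ s := by
    have h3 : n^2 * (n + t) ≤ n^2 * s := by nlinarith [h1]
    exact le_of_mul_le_mul_left h3 (by positivity)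
  have h4 : (n + t)^2 ≤ s^2 := by nlinarith [h2, hnpos.le, ht]
  have h5 : n * t = r^2 := by
    rw [htdef]; field_simp
  nlinarith [h4, hs2, h5, hnpos]

end Stmt10Aux

/-- Let `P` be a contractive linear projection on a unital
C*-algebra `A` whose range `B = P(A)` is a *-subalgebra of `A` with unit
`e = P(1)`.  Then `P` is positive: `x ≥ 0` implies `P(x) ≥ 0`; in particular
`P(x∘x*) ≥ 0` for every `x`, where `x∘y = (xy + yx)/2`. -/
theorem stmt_10 {A : Type*} [CStarAlgebra A] [PartialOrder A] [StarOrderedRing A]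
    (P : A →ₗ[ℂ] A)
    (hproj : ∀ x, P (P x) = P x)
    (hcontr : ∀ x, ‖P x‖ ≤ ‖x‖)
    (hmul : ∀ x ∈ Set.range P, ∀ y ∈ Set.range P, x * y ∈ Set.range P)
    (hstar : ∀ x ∈ Set.range P, star x ∈ Set.range P)
    (hesa : P 1 = star (P 1)) (heidem : P 1 * P 1 = P 1)
    (heunit : ∀ x ∈ Set.range P, P 1 * x = x ∧ x * P 1 = x) :
    (∀ x : A, 0 ≤ x → 0 ≤ P x) ∧
    (∀ x : A, 0 ≤ P ((2:ℂ)⁻¹ • (x * star x + star x * x))) := by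
  have part1 : ∀ x : A, 0 ≤ x → 0 ≤ P x := by
    rcases subsingleton_or_nontrivial A with hA | hA
    · intro x _; exact le_of_eq (Subsingleton.elim _ _)
    intro x hx0
    have hxsa : IsSelfAdjoint x := hx0.isSelfAdjoint
    set e := P 1 with he
    have hesa' : IsSelfAdjoint e := hesa.symm
    set a := P x with ha
    -- imaginary part of a vanishes
    have hk0 : (ℑ a : A) = 0 := by
      have h1 := stmt10_imzero P hcontr hstar hesa heunit x hxsa
      have h2 := stmt10_imzero P hcontr hstar hesa heunit (-x) hxsa.neg
      have h3 : ((ℑ (P (-x)) : A)) = -(ℑ a : A) := by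
        rw [map_neg P, map_neg imaginaryPart]
        rfl
      rw [h3] at h2
      rw [show (-(ℑ a : A))⁺ = ((ℑ a : A))⁻ from CFC.posPart_neg _] at h2
      have h4 := CFC.posPart_sub_negPart (ℑ a : A) (ℑ a).2
      rw [← h4, h1, h2, sub_zero]
    have haeq : a = (ℜ a : A) := by
      conv_lhs => rw [← realPart_add_I_smul_imaginaryPart a]
      rw [hk0, smul_zero, add_zero]
    have hasa : IsSelfAdjoint a := by rw [haeq]; exact (ℜ a).2
    set r := ‖x‖ with hr
    -- contraction estimate
    have hra : ‖r • e - a‖ ≤ r := by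
      have hP : r • e - a = P (r • (1:A) - x) := by
        rw [map_sub, P.map_smul_of_tower]
      rw [hP]
      refine (hcontr _).trans ?_
      have hle : x ≤ r • (1:A) := by
        have h := IsSelfAdjoint.le_algebraMap_norm_self (a := x) hxsa
        rwa [Algebra.algebraMap_eq_smul_one] at h
      have h1 : (0:A) ≤ r • (1:A) - x := sub_nonneg.2 hle
      have h2 : r • (1:A) - x ≤ r • (1:A) := sub_le_self _ hx0
      calc ‖r • (1:A) - x‖ ≤ ‖r • (1:A)‖ := CStarAlgebra.norm_le_norm_of_nonneg_of_le h1 h2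
        _ = r := by
            rw [norm_smul, norm_one, mul_one, Real.norm_eq_abs, _root_.abs_of_nonneg (norm_nonneg x)]
    -- negative part of a
    set b := a⁻ with hbdef
    have hbnn : 0 ≤ b := CFC.negPart_nonneg a
    have hbsa : IsSelfAdjoint b := hbnn.isSelfAdjoint
    have hab : a * b = -(b * b) := by
      conv_lhs => rw [← CFC.posPart_sub_negPart a hasa]
      rw [sub_mul, ← hbdef, CFC.posPart_mul_negPart, zero_sub]
    have hba : b * a = -(b * b) := by
      have h := congrArg star hab
      rwa [star_mul, star_neg, star_mul, hasa.star_eq, hbsa.star_eq] at h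
    have hea : e * a = a := (heunit a ⟨x, rfl⟩).1
    have hem : e * (b * b) = b * b := by
      have hbb : b * b = -(a * b) := by rw [hab, neg_neg]
      rw [hbb, mul_neg, ← mul_assoc, hea]
    obtain ⟨heb, hbe⟩ := stmt10_absorb hesa' hbsa hem
    have hkey : b * (r • e - a) * b = b^3 + r • b^2 := by
      calc b * (r • e - a) * b = r • (b * e * b) - b * a * b := by
            rw [mul_sub, mul_smul_comm, sub_mul, smul_mul_assoc]
        _ = r • (b * b) - (-(b * b)) * b := by rw [hbe, hba]
        _ = b^3 + r • b^2 := by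
            rw [neg_mul, sub_neg_eq_add, ← pow_two, ← pow_succ]
            exact add_comm _ _
    have h1 := stmt10_lemA b hbnn r
    have h2 : ‖b^3 + r • b^2‖ ≤ r * ‖b‖^2 := by
      rw [← hkey]
      have e1 : ‖b * (r • e - a) * b‖ ≤ ‖b * (r • e - a)‖ * ‖b‖ := norm_mul_le _ _
      have e2 : ‖b * (r • e - a)‖ ≤ ‖b‖ * ‖r • e - a‖ := norm_mul_le _ _
      nlinarith [norm_nonneg b, norm_nonneg (r • e - a), hra, norm_nonneg (b * (r • e - a))]
    have hbz : b = 0 := by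
      by_contra hbne
      have hpos : 0 < ‖b‖ := norm_pos_iff.mpr hbne
      have h3 : ‖b‖^3 ≤ 0 := by linarith
      exact absurd h3 (not_le.mpr (pow_pos hpos 3))
    have h4 := CFC.posPart_sub_negPart a hasa
    rw [← hbdef, hbz, sub_zero] at h4
    rw [← h4]
    exact CFC.posPart_nonneg a
  refine ⟨part1, fun x => ?_⟩
  set y := x * star x + star x * x with hy
  have hynn : 0 ≤ y := add_nonneg (mul_star_self_nonneg x) (star_mul_self_nonneg x)
  set q : ℝ := (Real.sqrt 2)⁻¹ with hq
  set c : A := ((q:ℂ)) • (1:A) with hc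
  have h1 : 0 ≤ star c * y * c := star_left_conjugate_nonneg hynn c
  have h2 : star c * y * c = (2:ℂ)⁻¹ • y := by
    rw [hc, star_smul, star_one, Complex.star_def, Complex.conj_ofReal]
    rw [smul_mul_assoc, smul_mul_assoc, mul_smul_comm, one_mul, mul_one, smul_smul]
    have hqq : (q:ℂ) * (q:ℂ) = (2:ℂ)⁻¹ := by
      have h : q * q = 2⁻¹ := by rw [hq, ← mul_inv, Real.mul_self_sqrt (by norm_num)]
      rw [← Complex.ofReal_mul, h]
      norm_num
    rw [hqq]
  exact part1 _ (h2 ▸ h1)
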